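/- Let Γ ∈ (1,2], D > 0, m ∈ R^2, E > sqrt(D^2 + ‖m‖^2), and let p* > 0 be the unique root of Φ(p) = p/(Γ-1) - E + ‖m‖^2/(E+p) + D·sqrt(1 - ‖m‖^2/(E+p)^2) on (0,∞). Then p* ≤ (Γ-1)·(E - D·sqrt(1 - ‖m‖^2/E^2)). -/
import Mathlib

/-- The unique positive root `p*` of the pressure equation satisfies the explicit upper bound
`p* ≤ (Γ-1) (E - D sqrt (1 - ‖m‖²/E²))`. -/
theorem pressure_root_upper_bound
    (Γ D E pstar : ℝ) (m : EuclideanSpace ℝ (Fin 2))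
    (hΓ1 : 1 < Γ) (hΓ2 : Γ ≤ 2) (hD : 0 < D)
    (hE : Real.sqrt (D ^ 2 + ‖m‖ ^ 2) < E)
    (Φ : ℝ → ℝ)
    (hΦ : ∀ p : ℝ, Φ p = p / (Γ - 1) - E + ‖m‖ ^ 2 / (E + p)
      + D * Real.sqrt (1 - ‖m‖ ^ 2 / (E + p) ^ 2))
    (hpstar : 0 < pstar) (hroot : Φ pstar = 0) :
    pstar ≤ (Γ - 1) * (E - D * Real.sqrt (1 - ‖m‖ ^ 2 / E ^ 2)) := by
  have hE0 : 0 < E := lt_of_le_of_lt (Real.sqrt_nonneg _) hE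
  have hΓ : 0 < Γ - 1 := by linarith
  have h1 : ‖m‖ ^ 2 / (E + pstar) ^ 2 ≤ ‖m‖ ^ 2 / E ^ 2 := by
    apply div_le_div_of_nonneg_left (sq_nonneg _) (pow_pos hE0 2)
    nlinarith
  have h2 : D * Real.sqrt (1 - ‖m‖ ^ 2 / E ^ 2)
      ≤ D * Real.sqrt (1 - ‖m‖ ^ 2 / (E + pstar) ^ 2) :=
    mul_le_mul_of_nonneg_left (Real.sqrt_le_sqrt (by linarith)) hD.le
  have h3 : 0 ≤ ‖m‖ ^ 2 / (E + pstar) := by positivity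
  rw [hΦ pstar] at hroot
  rw [← div_le_iff₀' hΓ]
  linarith
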